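/- Let K be a nonempty closed subset of the Cantor set such that K is homeomorphic to K ⊔ K ⊔ K but K is not homeomorphic to K ⊔ K. Let G be a connected metrizable space with at least two points such that every continuous map from G to itself is either constant or the identity. Then the product space K × G is homeomorphic to a clopen subspace of (K ⊔ K) × G, and (K ⊔ K) × G is homeomorphic to a clopen subspace of K × G, but K × G is not homeomorphic to (K ⊔ K) × G. -/

import Mathlib

open Cardinal

/-- `A` is homeomorphic to a clopen subset of `B`. -/
def HomeoToClopenSubset (A : Type*) [TopologicalSpace A]
    (B : Type*) [TopologicalSpace B] : Prop :=
  ∃ t : Set B, IsClopen t ∧ Nonempty (A ≃ₜ t)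

private lemma sliceConst {X D G : Type*} [TopologicalSpace X] [TopologicalSpace D]
    [TopologicalSpace G] [TotallyDisconnectedSpace D] [PreconnectedSpace G]
    (f : X × G → D) (hf : Continuous f) (x : X) (g g' : G) :
    f (x, g) = f (x, g') := by
  have hc : Continuous fun y : G => f (x, y) := hf.comp (Continuous.prodMk_right x)
  have hpc : IsPreconnected (Set.range fun y : G => f (x, y)) := isPreconnected_range hc
  exact hpc.subsingleton ⟨g, rfl⟩ ⟨g', rfl⟩

theorem statement11
    -- `K` is a nonempty closed subset of the Cantor set
    (K : Set (ℕ → Bool)) (hKne : K.Nonempty) (hKcl : IsClosed K)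
    -- `K` is homeomorphic to `K ⊔ K ⊔ K` but not to `K ⊔ K`
    (h3 : Nonempty (K ≃ₜ (↥K ⊕ ↥K ⊕ ↥K))) (h2 : IsEmpty (K ≃ₜ (↥K ⊕ ↥K)))
    -- `G` is a connected metrizable space with at least two points such that every
    -- continuous self-map of `G` is constant or the identity
    (G : Type*) [TopologicalSpace G] [TopologicalSpace.MetrizableSpace G]
    [ConnectedSpace G] [Nontrivial G]
    (hG : ∀ f : G → G, Continuous f → (∃ c, f = fun _ => c) ∨ f = id) :
    HomeoToClopenSubset (↥K × G) ((↥K ⊕ ↥K) × G) ∧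
    HomeoToClopenSubset ((↥K ⊕ ↥K) × G) (↥K × G) ∧
    IsEmpty ((↥K × G) ≃ₜ ((↥K ⊕ ↥K) × G)) := by
  obtain ⟨e3⟩ := h3
  obtain ⟨g₀⟩ := (inferInstance : Nonempty G)
  refine ⟨?_, ?_, ?_⟩
  · refine ⟨(Set.range Sum.inl) ×ˢ Set.univ, isClopen_range_inl.prod isClopen_univ, ⟨?_⟩⟩
    exact (Homeomorph.prodCongr (Topology.IsEmbedding.toHomeomorph Topology.IsEmbedding.inl)
      (Homeomorph.Set.univ G).symm).trans (Homeomorph.Set.prod _ _).symm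
  · set s : Set K := ⇑e3.symm '' Set.range Sum.inr with hs_def
    have hs : IsClopen s := by
      have : s = e3 ⁻¹' Set.range Sum.inr := by
        rw [hs_def]
        exact congrFun (Set.image_eq_preimage_of_inverse e3.right_inv e3.left_inv) _
      rw [this]
      exact isClopen_range_inr.preimage e3.continuous
    refine ⟨s ×ˢ Set.univ, hs.prod isClopen_univ, ⟨?_⟩⟩
    have h1 : (↥K ⊕ ↥K) ≃ₜ s :=
      (Topology.IsEmbedding.toHomeomorph Topology.IsEmbedding.inr).trans (e3.symm.image (Set.range Sum.inr))
    exact (Homeomorph.prodCongr h1 (Homeomorph.Set.univ G).symm).trans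
      (Homeomorph.Set.prod _ _).symm
  · constructor
    intro h
    apply h2.false
    set φ : ↥K → ↥K ⊕ ↥K := fun k => (h (k, g₀)).1 with hφ_def
    set ψ : ↥K ⊕ ↥K → ↥K := fun k => (h.symm (k, g₀)).1 with hψ_def
    have hφ : Continuous φ :=
      continuous_fst.comp (h.continuous.comp (continuous_id.prodMk continuous_const))
    have hψ : Continuous ψ :=
      continuous_fst.comp (h.symm.continuous.comp (continuous_id.prodMk continuous_const))
    have key : ∀ k g, (h (k, g)).1 = φ k := fun k g =>
      sliceConst (fun p => (h p).1) (continuous_fst.comp h.continuous) k g g₀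
    have key' : ∀ k g, (h.symm (k, g)).1 = ψ k := fun k g =>
      sliceConst (fun p => (h.symm p).1) (continuous_fst.comp h.symm.continuous) k g g₀
    have left : ∀ k, ψ (φ k) = k := by
      intro k
      have e1 : ψ (φ k) = (h.symm (φ k, (h (k, g₀)).2)).1 := (key' (φ k) _).symm
      have e2 : ((φ k : ↥K ⊕ ↥K), (h (k, g₀)).2) = h (k, g₀) := by
        rw [hφ_def]
      rw [e1, e2, h.symm_apply_apply]
    have right : ∀ k, φ (ψ k) = k := by
      intro k
      have e1 : φ (ψ k) = (h (ψ k, (h.symm (k, g₀)).2)).1 := (key (ψ k) _).symm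
      have e2 : ((ψ k : ↥K), (h.symm (k, g₀)).2) = h.symm (k, g₀) := by
        rw [hψ_def]
      rw [e1, e2, h.apply_symm_apply]
    exact ⟨⟨φ, ψ, left, right⟩, hφ, hψ⟩
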